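/- A₁² = ((b−1)/2)·A₁ + ((b+1)/2)·A₂. -/
import Mathlib


open Matrix

theorem stmt_0 (n : ℕ) (hn : 4 ≤ n) (b : ℚ) (hb : b = ((n : ℚ) - 2) / 2)
    (A₁ : Matrix (Fin (n - 1)) (Fin (n - 1)) ℚ)
    (h01 : ∀ i j, A₁ i j = 0 ∨ A₁ i j = 1)
    (hdiag : ∀ i, A₁ i i = 0)
    (hsum : A₁ + A₁ᵀ = (Matrix.of fun _ _ => (1 : ℚ)) - 1)
    (hrow : ∀ i, ∑ j, A₁ i j = b)
    (h11 : ∃ α β γ : ℚ, A₁ * A₁ = α • (1 : Matrix (Fin (n - 1)) (Fin (n - 1)) ℚ) + β • A₁ + γ • A₁ᵀ)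
    (h22 : ∃ α β γ : ℚ, A₁ᵀ * A₁ᵀ = α • (1 : Matrix (Fin (n - 1)) (Fin (n - 1)) ℚ) + β • A₁ + γ • A₁ᵀ)
    (h12 : ∃ α β γ : ℚ, A₁ * A₁ᵀ = α • (1 : Matrix (Fin (n - 1)) (Fin (n - 1)) ℚ) + β • A₁ + γ • A₁ᵀ)
    (h21 : ∃ α β γ : ℚ, A₁ᵀ * A₁ = α • (1 : Matrix (Fin (n - 1)) (Fin (n - 1)) ℚ) + β • A₁ + γ • A₁ᵀ) :
    A₁ * A₁ = ((b - 1) / 2) • A₁ + ((b + 1) / 2) • A₁ᵀ := by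
  have hm : 3 ≤ n - 1 := by omega
  have hn4 : (4 : ℚ) ≤ (n : ℚ) := by exact_mod_cast hn
  have hbge : 1 ≤ b := by rw [hb]; linarith
  have hbne : b ≠ 0 := by linarith
  -- cardinality
  have hcard : ((n - 1 : ℕ) : ℚ) = (n : ℚ) - 1 := by
    have : (1 : ℕ) ≤ n := by omega
    push_cast [Nat.cast_sub this]; ring
  -- entrywise form of hsum
  have hpair : ∀ i j : Fin (n - 1), i ≠ j → A₁ i j + A₁ j i = 1 := by
    intro i j hij
    have h := congrFun (congrFun hsum i) j
    simpa [Matrix.add_apply, Matrix.sub_apply, Matrix.one_apply, Matrix.transpose_apply,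
      hij] using h
  -- column sums
  have hcol : ∀ k : Fin (n - 1), ∑ j, A₁ j k = b := by
    intro k
    have h := congrFun hsum k
    have hs : ∑ j, (A₁ + A₁ᵀ) k j
        = ∑ j, (((Matrix.of fun _ _ => (1 : ℚ)) - 1 : Matrix (Fin (n-1)) (Fin (n-1)) ℚ)) k j := by
      rw [h]
    have hL : ∑ j, (A₁ + A₁ᵀ) k j = b + ∑ j, A₁ j k := by
      simp [Matrix.add_apply, Matrix.transpose_apply, Finset.sum_add_distrib, hrow k]
    have hR : ∑ j, (((Matrix.of fun _ _ => (1 : ℚ)) - 1 : Matrix (Fin (n-1)) (Fin (n-1)) ℚ)) k j = (n : ℚ) - 2 := by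
      simp [Matrix.sub_apply, Matrix.one_apply, Finset.sum_sub_distrib]
      rw [hcard]; ring
    rw [hL, hR] at hs
    have : (n : ℚ) - 2 = 2 * b := by rw [hb]; ring
    linarith [hs]
  obtain ⟨α, β, γ, h⟩ := h12
  -- entrywise form of h
  have he : ∀ i j : Fin (n - 1),
      (∑ k, A₁ i k * A₁ j k)
        = α * (if i = j then (1:ℚ) else 0) + β * A₁ i j + γ * A₁ j i := by
    intro i j
    have := congrFun (congrFun h i) j
    simpa [Matrix.mul_apply, Matrix.add_apply, Matrix.smul_apply, Matrix.one_apply,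
      Matrix.transpose_apply, smul_eq_mul] using this
  obtain ⟨i0, i1, hne⟩ : ∃ i j : Fin (n - 1), i ≠ j := by
    refine ⟨⟨0, by omega⟩, ⟨1, by omega⟩, ?_⟩
    simp [Fin.ext_iff]
  -- α = b
  have hα : α = b := by
    have h0 := he i0 i0
    have hsq : (∑ k, A₁ i0 k * A₁ i0 k) = ∑ k, A₁ i0 k := by
      refine Finset.sum_congr rfl fun k _ => ?_
      rcases h01 i0 k with h' | h' <;> rw [h'] <;> ring
    rw [hsq, hrow] at h0
    simpa [hdiag] using h0.symm
  -- β = γ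
  have hβγ : β = γ := by
    have h1 := he i0 i1
    have h2 := he i1 i0
    have hLsym : (∑ k, A₁ i0 k * A₁ i1 k) = ∑ k, A₁ i1 k * A₁ i0 k := by
      refine Finset.sum_congr rfl fun k _ => ?_; ring
    have hp := hpair i0 i1 hne
    rw [if_neg hne] at h1
    rw [if_neg (Ne.symm hne)] at h2
    rcases h01 i0 i1 with h' | h' <;>
      [ (have h'' : A₁ i1 i0 = 1 := by linarith);
        (have h'' : A₁ i1 i0 = 0 := by linarith) ] <;>
      rw [h', h''] at h1 h2 <;> rw [hLsym] at h1 <;> linarith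
  -- row sum gives β
  have hβ : β = (b - 1) / 2 := by
    have hs : ∑ j, (∑ k, A₁ i0 k * A₁ j k)
        = ∑ j, (α * (if i0 = j then (1:ℚ) else 0) + β * A₁ i0 j + γ * A₁ j i0) := by
      exact Finset.sum_congr rfl fun j _ => he i0 j
    have hL : ∑ j, (∑ k, A₁ i0 k * A₁ j k) = b * b := by
      rw [Finset.sum_comm]
      have : ∀ k : Fin (n-1), (∑ j, A₁ i0 k * A₁ j k) = A₁ i0 k * b := by
        intro k; rw [← Finset.mul_sum, hcol]
      rw [Finset.sum_congr rfl fun k _ => this k, ← Finset.sum_mul, hrow]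
    have hR : ∑ j, (α * (if i0 = j then (1:ℚ) else 0) + β * A₁ i0 j + γ * A₁ j i0)
        = α + β * b + γ * b := by
      rw [Finset.sum_add_distrib, Finset.sum_add_distrib, ← Finset.mul_sum, ← Finset.mul_sum,
        ← Finset.mul_sum, hrow, hcol]
      congr 1
      congr 1
      rw [Finset.sum_ite_eq Finset.univ i0 (fun _ => (1:ℚ))]
      simp
    rw [hL, hR, hα, ← hβγ] at hs
    have h3 : (b - 1 - 2 * β) * b = 0 := by linear_combination hs
    rcases mul_eq_zero.mp h3 with h4 | h4
    · linarith
    · exact absurd h4 hbne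
  -- now matrix algebra
  set J : Matrix (Fin (n-1)) (Fin (n-1)) ℚ := Matrix.of fun _ _ => (1 : ℚ) with hJdef
  have hAJ : A₁ * J = b • J := by
    ext i j
    simp [Matrix.mul_apply, hJdef, Matrix.smul_apply, smul_eq_mul, hrow]
  have hJeq : J = 1 + A₁ + A₁ᵀ := by
    have := sub_eq_iff_eq_add.mp hsum.symm
    rw [this]; abel
  have hA1 : A₁ = J - 1 - A₁ᵀ := eq_sub_of_add_eq hsum
  have hAAT : A₁ * A₁ᵀ = b • (1 : Matrix (Fin (n-1)) (Fin (n-1)) ℚ)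
      + ((b-1)/2) • A₁ + ((b-1)/2) • A₁ᵀ := by
    rw [h, hα, hβ, ← hβγ, hβ]
  calc A₁ * A₁ = A₁ * (J - 1 - A₁ᵀ) := by rw [← hA1]
    _ = A₁ * J - A₁ * 1 - A₁ * A₁ᵀ := by rw [Matrix.mul_sub, Matrix.mul_sub]
    _ = b • (1 + A₁ + A₁ᵀ) - A₁ - (b • 1 + ((b-1)/2) • A₁ + ((b-1)/2) • A₁ᵀ) := by
        rw [hAJ, hJeq, hAAT, Matrix.mul_one]
    _ = ((b - 1) / 2) • A₁ + ((b + 1) / 2) • A₁ᵀ := by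
        module
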